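/- Let L ⊆ ℝ^n be a linear subspace and P : ℝ^n → L the orthogonal projection onto L. Suppose z ∈ ℝ^n_+ \ {0} and i ∈ {1,...,n} are such that ‖(Pz)^+‖₁ ≤ (1/2)‖z‖_∞ and ‖z‖_∞ = z_i. Let D = I + e_i e_iᵀ (the diagonal matrix doubling the i-th coordinate) and let DL := {Dx : x ∈ L}. Then σ_i(DL) = 2 σ_i(L) and σ_j(DL) = σ_j(L) for all j ≠ i. -/

import Mathlib

noncomputable section

/-- The ℓ∞ norm of a vector in ℝⁿ. -/
def linf {n : ℕ} (x : EuclideanSpace ℝ (Fin n)) : ℝ := ⨆ j, |x j|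

/-- The ℓ₁ norm of the componentwise positive part `v⁺` of a vector `v ∈ ℝⁿ`. -/
def l1pos {n : ℕ} (v : EuclideanSpace ℝ (Fin n)) : ℝ := ∑ j, max (v j) 0

open Classical in
/-- The linear map `D = I + eᵢeᵢᵀ`, which doubles the `i`-th coordinate
and fixes all other coordinates. -/
def Dmap {n : ℕ} (i : Fin n) :
    EuclideanSpace ℝ (Fin n) →ₗ[ℝ] EuclideanSpace ℝ (Fin n) where
  toFun x := WithLp.toLp 2 (fun j => if j = i then 2 * x j else x j)
  map_add' x y := by
    ext j
    by_cases h : j = i <;> simp [h, PiLp.add_apply, mul_add]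
  map_smul' c x := by
    ext j
    by_cases h : j = i <;> simp [h, PiLp.smul_apply, smul_eq_mul] <;> ring

/-- `σ_j(M) := max {x_j : x ∈ M ∩ ℝⁿ₊, ‖x‖_∞ ≤ 1}`. -/
def sigmaJ {n : ℕ} (M : Submodule ℝ (EuclideanSpace ℝ (Fin n))) (j : Fin n) : ℝ :=
  sSup {t | ∃ x ∈ M, (∀ k, 0 ≤ x k) ∧ linf x ≤ 1 ∧ x j = t}

lemma le_linf' {n : ℕ} (x : EuclideanSpace ℝ (Fin n)) (j : Fin n) : |x j| ≤ linf x := by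
  unfold linf
  exact le_ciSup (Set.finite_range fun k => |x k|).bddAbove j

lemma Dmap_apply {n : ℕ} (i : Fin n) (x : EuclideanSpace ℝ (Fin n)) (j : Fin n) :
    Dmap i x j = if j = i then 2 * x j else x j := rfl

/-- If `z ∈ ℝⁿ₊ \ {0}` satisfies `‖(Pz)⁺‖₁ ≤ (1/2)‖z‖_∞ = (1/2) z_i`, where `P` is the
orthogonal projection onto `L`, then rescaling by `D = I + eᵢeᵢᵀ` gives
`σ_i(DL) = 2σ_i(L)` and `σ_j(DL) = σ_j(L)` for `j ≠ i`. -/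
theorem sigmaJ_rescale {n : ℕ} (L : Submodule ℝ (EuclideanSpace ℝ (Fin n)))
    (z : EuclideanSpace ℝ (Fin n)) (hz0 : ∀ j, 0 ≤ z j) (hzne : z ≠ 0)
    (i : Fin n) (hzi : linf z = z i)
    (hPz : l1pos ((L.orthogonalProjection z : L) : EuclideanSpace ℝ (Fin n))
      ≤ (1 / 2) * linf z) :
    sigmaJ (L.map (Dmap i)) i = 2 * sigmaJ L i ∧
      ∀ j, j ≠ i → sigmaJ (L.map (Dmap i)) j = sigmaJ L j := by
  classical
  haveI : Nonempty (Fin n) := ⟨i⟩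
  set Pz : EuclideanSpace ℝ (Fin n) :=
    ((L.orthogonalProjection z : L) : EuclideanSpace ℝ (Fin n)) with hPzdef
  -- z i > 0
  have hzi0 : 0 < z i := by
    obtain ⟨j, hj⟩ : ∃ j, z j ≠ 0 := by
      by_contra h
      push_neg at h
      exact hzne (by ext j; exact h j)
    have h1 : 0 < z j := lt_of_le_of_ne (hz0 j) (Ne.symm hj)
    have h2 : |z j| ≤ linf z := le_linf' z j
    rw [abs_of_nonneg (hz0 j), hzi] at h2
    linarith
  -- key bound: any feasible x in L has x i ≤ 1/2
  have key : ∀ x, x ∈ L → (∀ k, 0 ≤ x k) → linf x ≤ 1 → x i ≤ 1 / 2 := by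
    intro x hxL hx0 hx1
    have hxle1 : ∀ k, x k ≤ 1 := fun k =>
      le_trans (le_abs_self _) ((le_linf' x k).trans hx1)
    have hperp : z - Pz ∈ Lᗮ := L.sub_starProjection_mem_orthogonal z
    have hio : (inner ℝ x (z - Pz) : ℝ) = 0 :=
      (Submodule.mem_orthogonal L (z - Pz)).mp hperp x hxL
    have hinner : (inner ℝ x z : ℝ) = inner ℝ x Pz := by
      rw [inner_sub_right] at hio; linarith
    have hsum : ∑ j, x j * z j = ∑ j, x j * Pz j := by
      have h1 : (inner ℝ x z : ℝ) = ∑ j, x j * z j := by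
        simp [PiLp.inner_apply, RCLike.inner_apply, conj_trivial, mul_comm]
      have h2 : (inner ℝ x Pz : ℝ) = ∑ j, x j * Pz j := by
        simp [PiLp.inner_apply, RCLike.inner_apply, conj_trivial, mul_comm]
      rw [← h1, ← h2, hinner]
    have h1 : x i * z i ≤ ∑ j, x j * z j :=
      Finset.single_le_sum (fun j _ => mul_nonneg (hx0 j) (hz0 j)) (Finset.mem_univ i)
    have h3 : ∑ j, x j * Pz j ≤ l1pos Pz := by
      unfold l1pos
      apply Finset.sum_le_sum
      intro j _
      calc x j * Pz j ≤ x j * max (Pz j) 0 :=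
            mul_le_mul_of_nonneg_left (le_max_left _ _) (hx0 j)
        _ ≤ 1 * max (Pz j) 0 :=
            mul_le_mul_of_nonneg_right (hxle1 j) (le_max_right _ _)
        _ = max (Pz j) 0 := one_mul _
    have h4 : x i * z i ≤ (1 / 2) * z i := by
      calc x i * z i ≤ ∑ j, x j * z j := h1
        _ = ∑ j, x j * Pz j := hsum
        _ ≤ l1pos Pz := h3
        _ ≤ (1 / 2) * linf z := hPz
        _ = (1 / 2) * z i := by rw [hzi]
    nlinarith
  -- the feasible-value sets
  set A : Fin n → Set ℝ :=
    fun j => {t | ∃ x ∈ L, (∀ k, 0 ≤ x k) ∧ linf x ≤ 1 ∧ x j = t} with hA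
  set B : Fin n → Set ℝ :=
    fun j => {t | ∃ x ∈ L.map (Dmap i), (∀ k, 0 ≤ x k) ∧ linf x ≤ 1 ∧ x j = t} with hB
  have hsigA : ∀ j, sigmaJ L j = sSup (A j) := fun j => rfl
  have hsigB : ∀ j, sigmaJ (L.map (Dmap i)) j = sSup (B j) := fun j => rfl
  have hlinf0 : linf (0 : EuclideanSpace ℝ (Fin n)) ≤ 1 := by
    unfold linf
    apply ciSup_le
    intro j
    norm_num
  have hAne : ∀ j, (A j).Nonempty := fun j =>
    ⟨0, 0, L.zero_mem, fun k => le_refl 0, hlinf0, rfl⟩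
  have hBne : ∀ j, (B j).Nonempty := fun j =>
    ⟨0, 0, (L.map (Dmap i)).zero_mem, fun k => le_refl 0, hlinf0, rfl⟩
  have hAbd : ∀ j, BddAbove (A j) := by
    intro j
    refine ⟨1, ?_⟩
    rintro t ⟨x, hxL, hx0, hx1, rfl⟩
    exact le_trans (le_abs_self _) ((le_linf' x j).trans hx1)
  have hBbd : ∀ j, BddAbove (B j) := by
    intro j
    refine ⟨1, ?_⟩
    rintro t ⟨x, hxL, hx0, hx1, rfl⟩
    exact le_trans (le_abs_self _) ((le_linf' x j).trans hx1)
  -- forward: feasible x in L gives feasible Dmap i x in L.map (Dmap i)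
  have fwd : ∀ x, x ∈ L → (∀ k, 0 ≤ x k) → linf x ≤ 1 →
      Dmap i x ∈ L.map (Dmap i) ∧ (∀ k, 0 ≤ Dmap i x k) ∧ linf (Dmap i x) ≤ 1 := by
    intro x hxL hx0 hx1
    have hxi := key x hxL hx0 hx1
    have hxle : ∀ k, |x k| ≤ 1 := fun k => (le_linf' x k).trans hx1
    refine ⟨Submodule.mem_map_of_mem hxL, ?_, ?_⟩
    · intro k
      rw [Dmap_apply]
      by_cases h : k = i
      · rw [if_pos h]; linarith [hx0 k]
      · rw [if_neg h]; exact hx0 k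
    · apply ciSup_le
      intro k
      rw [Dmap_apply]
      by_cases h : k = i
      · subst h
        rw [if_pos rfl, abs_of_nonneg (by linarith [hx0 k])]
        linarith
      · rw [if_neg h]; exact hxle k
  -- backward: feasible y in L.map (Dmap i) comes from feasible x in L
  have bwd : ∀ y, y ∈ L.map (Dmap i) → (∀ k, 0 ≤ y k) → linf y ≤ 1 →
      ∃ x, x ∈ L ∧ (∀ k, 0 ≤ x k) ∧ linf x ≤ 1 ∧ Dmap i x = y := by
    intro y hy hy0 hy1
    obtain ⟨x, hxL, hxy⟩ := hy
    have hx : ∀ k, (if k = i then 2 * x k else x k) = y k := by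
      intro k; rw [← Dmap_apply, hxy]
    have hyle : ∀ k, |y k| ≤ 1 := fun k => (le_linf' y k).trans hy1
    have hx0 : ∀ k, 0 ≤ x k := by
      intro k
      by_cases h : k = i
      · have := hx k; rw [if_pos h] at this
        have := hy0 k; linarith [hy0 k, (hx k).symm ▸ this]
      · have := hx k; rw [if_neg h] at this
        rw [this]; exact hy0 k
    refine ⟨x, hxL, hx0, ?_, hxy⟩
    apply ciSup_le
    intro k
    by_cases h : k = i
    · have hk := hx k; rw [if_pos h] at hk
      rw [abs_of_nonneg (hx0 k)]
      have h1 := hyle k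
      rw [abs_of_nonneg (hy0 k)] at h1
      linarith
    · have hk := hx k; rw [if_neg h] at hk
      rw [hk]; exact hyle k
  -- the sets agree off i
  have hBA : ∀ j, j ≠ i → B j = A j := by
    intro j hj
    ext t
    constructor
    · rintro ⟨y, hy, hy0, hy1, rfl⟩
      obtain ⟨x, hxL, hx0, hx1, hxy⟩ := bwd y hy hy0 hy1
      exact ⟨x, hxL, hx0, hx1, by rw [← hxy, Dmap_apply, if_neg hj]⟩
    · rintro ⟨x, hxL, hx0, hx1, rfl⟩
      obtain ⟨hm, h0, h1⟩ := fwd x hxL hx0 hx1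
      exact ⟨Dmap i x, hm, h0, h1, by rw [Dmap_apply, if_neg hj]⟩
  constructor
  · rw [hsigB i, hsigA i]
    apply le_antisymm
    · apply csSup_le (hBne i)
      rintro t ⟨y, hy, hy0, hy1, rfl⟩
      obtain ⟨x, hxL, hx0, hx1, hxy⟩ := bwd y hy hy0 hy1
      have hxA : x i ∈ A i := ⟨x, hxL, hx0, hx1, rfl⟩
      have h1 : x i ≤ sSup (A i) := le_csSup (hAbd i) hxA
      have hyi : y i = 2 * x i := by rw [← hxy, Dmap_apply, if_pos rfl]
      linarith
    · have hle : sSup (A i) ≤ sSup (B i) / 2 := by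
        apply csSup_le (hAne i)
        rintro t ⟨x, hxL, hx0, hx1, rfl⟩
        obtain ⟨hm, h0, h1⟩ := fwd x hxL hx0 hx1
        have hmem : Dmap i x i ∈ B i := ⟨Dmap i x, hm, h0, h1, rfl⟩
        have h2 := le_csSup (hBbd i) hmem
        rw [Dmap_apply, if_pos rfl] at h2
        linarith
      linarith
  · intro j hj
    rw [hsigB j, hsigA j, hBA j hj]
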